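/- Let L/F be a field extension, let μ ∈ L ∖ F be algebraic over F, set K = F(μ) and t = dim_F(K). Let S̄ be a K-subspace of L with dim_K(S̄) = ℓ, where ℓ ≥ 1 is finite, and let b ∈ L ∖ {0} with S̄ ∩ bK = {0}. Let m, j > 0 be integers with m + j ≤ t + 1, and set S = S̄ ⊕ b·⟨1, μ, …, μ^{m−1}⟩_F and T = ⟨1, μ, …, μ^{j−1}⟩_F. Then ⟨ST⟩_F = S̄ ⊕ b·⟨1, μ, …, μ^{m+j−2}⟩_F and dim_F(⟨ST⟩_F) = tℓ + m + j − 1 = dim_F(S) + dim_F(T) − 1; in particular (S, T) is a critical pair. -/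

import Mathlib

open Submodule Pointwise

/-- The span `⟨1, μ, …, μ^{m-1}⟩_F`. -/
noncomputable def pows (F : Type*) {L : Type*} [Field F] [Field L] [Algebra F L]
    (μ : L) (m : ℕ) : Submodule F L :=
  Submodule.span F (Set.range fun i : Fin m => μ ^ (i : ℕ))

/-- Multiplication of a subspace by a scalar: `b · W`. -/
noncomputable def bmul (F : Type*) {L : Type*} [Field F] [Field L] [Algebra F L]
    (b : L) (W : Submodule F L) : Submodule F L :=
  W.map (LinearMap.mulLeft F b)


section aux
variable (F : Type*) {L : Type*} [Field F] [Field L] [Algebra F L]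

lemma bmul_eq_span_mul (b : L) (W : Submodule F L) :
    bmul F b W = span F {b} * W := by
  apply le_antisymm
  · rintro x ⟨w, hw, rfl⟩
    exact mul_mem_mul (mem_span_singleton_self b) hw
  · rw [Submodule.mul_le]
    intro c hc w hw
    rw [mem_span_singleton] at hc
    obtain ⟨f, rfl⟩ := hc
    rw [smul_mul_assoc]
    exact smul_mem _ f ⟨w, hw, rfl⟩

lemma pows_mul (μ : L) {m j : ℕ} (hm : 0 < m) (hj : 0 < j) :
    pows F μ m * pows F μ j = pows F μ (m + j - 1) := by
  unfold pows
  rw [span_mul_span]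
  apply le_antisymm
  · rw [span_le]
    rintro x ⟨y, ⟨a, rfl⟩, z, ⟨c, rfl⟩, rfl⟩
    refine subset_span ⟨⟨(a : ℕ) + (c : ℕ), by omega⟩, ?_⟩
    simp [pow_add]
  · rw [span_le]
    rintro x ⟨k, rfl⟩
    have hk : (k : ℕ) ≤ m + j - 2 := by omega
    have hx : μ ^ (k:ℕ) = μ ^ min (k:ℕ) (m-1) * μ ^ ((k:ℕ) - min (k:ℕ) (m-1)) := by
      rw [← pow_add]; congr 1; omega
    refine subset_span ?_
    simp only []
    rw [hx]
    exact Set.mul_mem_mul ⟨⟨min (k:ℕ) (m-1), by omega⟩, rfl⟩ ⟨⟨(k:ℕ) - min (k:ℕ) (m-1), by omega⟩, rfl⟩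

end aux

section aux2
variable (F : Type*) {L : Type*} [Field F] [Field L] [Algebra F L]

lemma pows_le_adjoin (μ : L) (k : ℕ) :
    pows F μ k ≤ Subalgebra.toSubmodule (Algebra.adjoin F {μ}) := by
  rw [pows, span_le]
  rintro x ⟨i, rfl⟩
  exact pow_mem (Algebra.self_mem_adjoin_singleton F μ) _

lemma one_mem_pows (μ : L) {k : ℕ} (hk : 0 < k) : (1 : L) ∈ pows F μ k :=
  subset_span ⟨⟨0, hk⟩, by simp⟩

lemma li_pows (μ : L) (halg : IsAlgebraic F μ) {t k : ℕ}
    (ht : Module.finrank F ↥(Algebra.adjoin F {μ}) = t) (hk : k ≤ t) :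
    LinearIndependent F (fun i : Fin k => μ ^ (i : ℕ)) := by
  have hint : IsIntegral F μ := halg.isIntegral
  set pb := Algebra.adjoin.powerBasis hint with hpb
  have hdim : t = pb.dim := by rw [← ht, pb.finrank]
  have li := pb.basis.linearIndependent
  have li2 := li.map' (Subalgebra.val _).toLinearMap
    (LinearMap.ker_eq_bot.mpr Subtype.val_injective)
  have li3 := li2.comp (Fin.castLE (hdim ▸ hk)) (Fin.castLE_injective _)
  convert li3 with i
  simp only [Function.comp_apply, AlgHom.toLinearMap_apply, pb.basis_eq_pow]
  rfl
  all_goals rfl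

lemma finrank_pows (μ : L) (halg : IsAlgebraic F μ) {t k : ℕ}
    (ht : Module.finrank F ↥(Algebra.adjoin F {μ}) = t) (hk : k ≤ t) :
    Module.finrank F ↥(pows F μ k) = k := by
  rw [pows, finrank_span_eq_card (li_pows F μ halg ht hk), Fintype.card_fin]

lemma bmul_pows_eq_span (b : L) (μ : L) (k : ℕ) :
    bmul F b (pows F μ k) = span F (Set.range fun i : Fin k => b * μ ^ (i : ℕ)) := by
  rw [bmul, pows, Submodule.map_span, ← Set.range_comp]
  rfl

lemma finrank_bmul_pows (b : L) (hb : b ≠ 0) (μ : L) (halg : IsAlgebraic F μ) {t k : ℕ}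
    (ht : Module.finrank F ↥(Algebra.adjoin F {μ}) = t) (hk : k ≤ t) :
    Module.finrank F ↥(bmul F b (pows F μ k)) = k := by
  rw [bmul_pows_eq_span]
  have li := (li_pows F μ halg ht hk).map' (LinearMap.mulLeft F b)
    (LinearMap.ker_eq_bot.mpr (mul_right_injective₀ hb))
  exact (finrank_span_eq_card li).trans (Fintype.card_fin k)

end aux2

/-- `L/F` a field extension, `μ ∈ L \ F` algebraic over `F`,
`K = F(μ)`, `t = dim_F K`, `S̄` a `K`-subspace of `L` of `K`-dimension `ℓ ≥ 1`
(equivalently, closed under multiplication by `K` and of `F`-dimension `ℓt`),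
`b ≠ 0` with `S̄ ∩ bK = {0}`, `m, j > 0`, `m + j ≤ t + 1`,
`S = S̄ ⊕ b·⟨1, μ, …, μ^{m-1}⟩_F`, `T = ⟨1, μ, …, μ^{j-1}⟩_F`. Then
`⟨ST⟩_F = S̄ ⊕ b·⟨1, μ, …, μ^{m+j-2}⟩_F` and
`dim_F ⟨ST⟩_F = tℓ + m + j - 1 = dim_F S + dim_F T - 1`; in particular `(S,T)` is a
critical pair. -/
theorem stmt17 (F L : Type*) [Field F] [Field L] [Algebra F L]
    (μ : L) (hμ : μ ∉ Set.range (algebraMap F L)) (halg : IsAlgebraic F μ)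
    (t : ℕ) (ht : Module.finrank F ↥(Algebra.adjoin F {μ}) = t)
    (Sbar : Submodule F L)
    (hSmod : ∀ α ∈ Algebra.adjoin F {μ}, ∀ s ∈ Sbar, α * s ∈ Sbar)
    (l : ℕ) (hl : 1 ≤ l) (hSdim : Module.finrank F ↥Sbar = l * t)
    (b : L) (hb : b ≠ 0)
    (hdisj : Disjoint Sbar (bmul F b (Subalgebra.toSubmodule (Algebra.adjoin F {μ}))))
    (m j : ℕ) (hm : 0 < m) (hj : 0 < j) (hmj : m + j ≤ t + 1)
    (S : Submodule F L) (hS : S = Sbar ⊔ bmul F b (pows F μ m))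
    (T : Submodule F L) (hT : T = pows F μ j) :
    Submodule.span F ((S : Set L) * (T : Set L))
        = Sbar ⊔ bmul F b (pows F μ (m + j - 1)) ∧
    Module.finrank F ↥(Submodule.span F ((S : Set L) * (T : Set L))) + 1
        = t * l + m + j ∧
    Module.finrank F ↥(Submodule.span F ((S : Set L) * (T : Set L))) + 1
        = Module.finrank F ↥S + Module.finrank F ↥T := by
  have hint : IsIntegral F μ := halg.isIntegral
  haveI : Module.Finite F (Algebra.adjoin F {μ}) := (Algebra.adjoin.powerBasis hint).finite
  have htpos : 0 < t := ht ▸ Module.finrank_pos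
  haveI : FiniteDimensional F Sbar :=
    Module.finite_of_finrank_pos (by rw [hSdim]; exact Nat.mul_pos hl htpos)
  have hmt : m ≤ t := by omega
  have hjt : j ≤ t := by omega
  have hmjt : m + j - 1 ≤ t := by omega
  -- the product
  have hSbarP : Sbar * pows F μ j = Sbar := by
    apply le_antisymm
    · rw [Submodule.mul_le]
      intro s hs p hp
      rw [mul_comm]
      exact hSmod p (pows_le_adjoin F μ j hp) s hs
    · intro s hs
      simpa using mul_mem_mul hs (one_mem_pows F μ hj)
  have key : Submodule.span F ((S : Set L) * (T : Set L))
      = Sbar ⊔ bmul F b (pows F μ (m + j - 1)) := by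
    have h1 : Submodule.span F ((S : Set L) * (T : Set L)) = S * T := by
      conv_rhs => rw [← Submodule.span_eq S, ← Submodule.span_eq T]
      rw [Submodule.span_mul_span]
    rw [h1, hS, hT, Submodule.sup_mul, hSbarP, bmul_eq_span_mul, mul_assoc,
      pows_mul F μ hm hj, ← bmul_eq_span_mul]
  -- dimensions
  have hdisj' : ∀ k, Disjoint Sbar (bmul F b (pows F μ k)) := fun k =>
    hdisj.mono_right (Submodule.map_mono (pows_le_adjoin F μ k))
  have hrank : ∀ k, k ≤ t →
      Module.finrank F ↥(Sbar ⊔ bmul F b (pows F μ k)) = l * t + k := by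
    intro k hk
    haveI : FiniteDimensional F ↥(bmul F b (pows F μ k)) := by
      rw [bmul_pows_eq_span]
      exact FiniteDimensional.span_of_finite F (Set.finite_range _)
    have h := Submodule.finrank_sup_add_finrank_inf_eq Sbar (bmul F b (pows F μ k))
    rw [disjoint_iff.mp (hdisj' k), finrank_bot, hSdim,
      finrank_bmul_pows F b hb μ halg ht hk] at h
    omega
  refine ⟨key, ?_, ?_⟩
  · rw [key, hrank _ hmjt, Nat.mul_comm l t]
    generalize t * l = a
    omega
  · rw [key, hrank _ hmjt, hS, hrank _ hmt, hT, finrank_pows F μ halg ht hjt]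
    generalize l * t = a
    omega
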